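/- If G is a complete multipartite graph (the complement of a disjoint union of cliques), then every greedy partition of G has the same size, namely the size of the largest independent set (largest part) of G. -/

import Mathlib

/-- A good partition of `G`: a partition of the vertex set into nonempty parts,
each inducing a clique; it is greedy if for every `l ≥ 1` the union of all parts
of size at most `l` spans no complete subgraph on `l+1` vertices. -/
def IsGreedyPartition {V : Type*} [Fintype V] [DecidableEq V]
    (G : SimpleGraph V) (P : Finset (Finset V)) : Prop :=
  (∀ C ∈ P, C.Nonempty) ∧
  (∀ C ∈ P, G.IsClique (C : Set V)) ∧
  (∀ v : V, ∃! C, C ∈ P ∧ v ∈ C) ∧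
  (∀ l : ℕ, 1 ≤ l → ∀ s : Finset V,
    (∀ v ∈ s, ∃ C ∈ P, v ∈ C ∧ C.card ≤ l) → ¬ G.IsNClique (l + 1) s)

/-- If `G` is complete multipartite, with parts given as the fibers
of a map `p` (vertices are adjacent iff they lie in different fibers), then
every greedy partition of `G` has the same size, namely the size of the largest
part of `G`. -/
theorem greedy_partition_size_of_complete_multipartite
    {V ι : Type*} [Fintype V] [DecidableEq V] [Fintype ι] [DecidableEq ι]
    (G : SimpleGraph V) (p : V → ι)
    (hG : ∀ u v, G.Adj u v ↔ p u ≠ p v)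
    (P : Finset (Finset V)) (hP : IsGreedyPartition G P) :
    P.card = Finset.univ.sup
      (fun i => (Finset.univ.filter (fun v => p v = i)).card) := by
  classical
  obtain ⟨hne, hclq, hcov, hgr⟩ := hP
  -- parts are pairwise disjoint
  have hdisj : ∀ C ∈ P, ∀ C' ∈ P, ∀ v, v ∈ C → v ∈ C' → C = C' := by
    intro C hC C' hC' v hv hv'
    obtain ⟨D, hD, hU⟩ := hcov v
    rw [hU C ⟨hC, hv⟩, hU C' ⟨hC', hv'⟩]
  -- p is injective on each part
  have hpinj : ∀ C ∈ P, Set.InjOn p (C : Set V) := by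
    intro C hC u hu v hv h
    by_contra hne'
    exact (hG u v).mp (hclq C hC hu hv hne') h
  have hfibcard : ∀ C ∈ P, (C.image p).card = C.card := by
    intro C hC; exact Finset.card_image_of_injOn (hpinj C hC)
  -- lower bound: every fiber injects into P
  have hlb : ∀ i : ι, (Finset.univ.filter (fun v => p v = i)).card ≤ P.card := by
    intro i
    apply Finset.card_le_card_of_injOn (fun v => P.choose (fun C => v ∈ C) (hcov v))
    · intro v hv
      exact Finset.choose_mem _ _ _
    · intro u hu v hv h
      by_contra hne'
      have hu' : u ∈ P.choose (fun C => u ∈ C) (hcov u) :=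
        Finset.choose_property (fun C => u ∈ C) P (hcov u)
      have hv' : v ∈ P.choose (fun C => v ∈ C) (hcov v) :=
        Finset.choose_property (fun C => v ∈ C) P (hcov v)
      have h' : P.choose (fun C => u ∈ C) (hcov u) = P.choose (fun C => v ∈ C) (hcov v) := h
      rw [h'] at hu'
      have hadj := (hG u v).mp
        (hclq _ (Finset.choose_mem _ _ (hcov v)) hu' hv' hne')
      simp only [Finset.mem_coe, Finset.mem_filter] at hu hv
      exact hadj (hu.2.trans hv.2.symm)
  -- fibers used by parts of size ≤ l
  set R : ℕ → Finset ι :=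
    fun l => (P.filter (fun C => C.card ≤ l)).biUnion (fun C => C.image p) with hR
  have hRmono : ∀ {l l'}, l ≤ l' → R l ⊆ R l' := by
    intro l l' hll
    apply Finset.biUnion_subset_biUnion_of_subset_left
    intro C hC
    simp only [Finset.mem_filter] at hC ⊢
    exact ⟨hC.1, hC.2.trans hll⟩
  -- key: R l has at most l fibers
  have hRcard : ∀ l : ℕ, 1 ≤ l → (R l).card ≤ l := by
    intro l hl
    by_contra hlt
    push_neg at hlt
    obtain ⟨T, hTsub, hTcard⟩ := Finset.exists_subset_card_eq (s := R l) (n := l + 1) hlt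
    have hex : ∀ i ∈ T, ∃ v, p v = i ∧ ∃ C ∈ P, v ∈ C ∧ C.card ≤ l := by
      intro i hi
      have := hTsub hi
      simp only [hR, Finset.mem_biUnion, Finset.mem_filter, Finset.mem_image] at this
      obtain ⟨C, ⟨hCP, hCl⟩, v, hvC, hpv⟩ := this
      exact ⟨v, hpv, C, hCP, hvC, hCl⟩
    have hTne : T.Nonempty := Finset.card_pos.mp (by omega)
    obtain ⟨i₁, hi₁⟩ := hTne
    obtain ⟨v₁, -⟩ := hex i₁ hi₁
    have : Nonempty V := ⟨v₁⟩
    choose! f hf1 hf2 using hex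
    have hinjf : Set.InjOn f (T : Set ι) := by
      intro i hi j hj h
      rw [← hf1 i hi, ← hf1 j hj, h]
    have hcard : (T.image f).card = l + 1 := by
      rw [Finset.card_image_of_injOn hinjf, hTcard]
    refine hgr l hl (T.image f) ?_ ?_
    · intro v hv
      simp only [Finset.mem_image] at hv
      obtain ⟨i, hi, rfl⟩ := hv
      exact hf2 i hi
    · refine ⟨?_, hcard⟩
      intro u hu v hv huv
      simp only [Finset.coe_image, Set.mem_image, Finset.mem_coe] at hu hv
      obtain ⟨i, hi, rfl⟩ := hu
      obtain ⟨j, hj, rfl⟩ := hv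
      rw [hG]
      rw [hf1 i hi, hf1 j hj]
      intro h; exact huv (by rw [h])
  -- every part's fiber set equals R of its size
  have hfib_eq : ∀ C ∈ P, C.image p = R C.card := by
    intro C hC
    have h1 : C.image p ⊆ R C.card := by
      intro i hi
      simp only [hR, Finset.mem_biUnion, Finset.mem_filter]
      exact ⟨C, ⟨hC, le_refl _⟩, hi⟩
    refine Finset.eq_of_subset_of_card_le h1 ?_
    rw [hfibcard C hC]
    exact hRcard C.card (Finset.card_pos.mpr (hne C hC))
  -- upper bound
  have hub : P.card ≤ Finset.univ.sup
      (fun i => (Finset.univ.filter (fun v => p v = i)).card) := by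
    rcases P.eq_empty_or_nonempty with hPe | hPne
    · simp [hPe]
    · obtain ⟨C₀, hC₀, hmin⟩ := P.exists_min_image Finset.card hPne
      obtain ⟨v₀, hv₀⟩ := hne C₀ hC₀
      have hi₀ : p v₀ ∈ C₀.image p := Finset.mem_image_of_mem p hv₀
      set i₀ := p v₀
      have hall : ∀ C ∈ P, ∃ v, v ∈ C ∧ p v = i₀ := by
        intro C hC
        have : i₀ ∈ C.image p := by
          rw [hfib_eq C hC]
          apply hRmono (hmin C hC)
          rw [← hfib_eq C₀ hC₀]
          exact hi₀
        simp only [Finset.mem_image] at this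
        obtain ⟨v, hv, hpv⟩ := this
        exact ⟨v, hv, hpv⟩
      have : Nonempty V := ⟨v₀⟩
      choose! g hg1 hg2 using hall
      have : P.card ≤ (Finset.univ.filter (fun v => p v = i₀)).card := by
        apply Finset.card_le_card_of_injOn g
        · intro C hC
          simp only [Finset.mem_coe, Finset.mem_filter]
          exact ⟨Finset.mem_univ _, hg2 C hC⟩
        · intro C hC C' hC' h
          exact hdisj C hC C' hC' (g C) (hg1 C hC) (h ▸ hg1 C' hC')
      exact this.trans (Finset.le_sup (f := fun i => (Finset.univ.filter (fun v => p v = i)).card) (Finset.mem_univ i₀))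
  exact le_antisymm hub (Finset.sup_le fun i _ => hlb i)
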